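/- Let c ∈ ℝ^k be such that A = Σ_j c_j A_j is invertible, and let a ∈ ℂ^m be such that the matrix Re B is nonsingular, where B is the k×k matrix with entries B_{lj} = ⟨A_l A^{-1} A_j a, a⟩ and Re B = (B + conj(B))/2. Then (a^{Re F})^{Re F} ∩ a^{Re F} = {0}. -/
import Mathlib


open Matrix Complex

/-- The standard Hermitian inner product on `ℂ^m`: `⟪a,b⟫ = ∑ l, a l * conj (b l)`. -/
noncomputable def hermInner {m : ℕ} (a b : Fin m → ℂ) : ℂ :=
  ∑ l, a l * (starRingEnd ℂ) (b l)

/-- The `ℂ^k`-valued Hermitian form `F(z,ζ) = (⟪A₁ z, ζ⟫, …, ⟪A_k z, ζ⟫)`. -/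
noncomputable def Fform {m k : ℕ} (A : Fin k → Matrix (Fin m) (Fin m) ℂ)
    (z ζ : Fin m → ℂ) : Fin k → ℂ :=
  fun j => hermInner ((A j).mulVec z) ζ

/-- The orthogonal complement `S^F` of a set `S ⊆ ℂ^m`. -/
noncomputable def orthF {m k : ℕ} (A : Fin k → Matrix (Fin m) (Fin m) ℂ)
    (S : Set (Fin m → ℂ)) : Set (Fin m → ℂ) :=
  {x | ∀ y ∈ S, Fform A x y = 0}

/-- The subspace `T(a,b) = {y : ∃ x, F(x,b) + F(a,y) = 0}`. -/
noncomputable def Tspace {m k : ℕ} (A : Fin k → Matrix (Fin m) (Fin m) ℂ)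
    (a b : Fin m → ℂ) : Set (Fin m → ℂ) :=
  {y | ∃ x, Fform A x b + Fform A a y = 0}

/-- `F` is nondegenerate: the `A_j` are `ℝ`-linearly independent, and
`F(z,ζ) = 0` for all `z` implies `ζ = 0`. -/
noncomputable def FNondeg {m k : ℕ} (A : Fin k → Matrix (Fin m) (Fin m) ℂ) : Prop :=
  LinearIndependent ℝ A ∧ ∀ ζ : Fin m → ℂ, (∀ z : Fin m → ℂ, Fform A z ζ = 0) → ζ = 0

/-- `F` is T-nondegenerate: for generic `a ∈ ℂ^m`, `T(a)^F = {0}`. -/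
noncomputable def TNondeg {m k : ℕ} (A : Fin k → Matrix (Fin m) (Fin m) ℂ) : Prop :=
  ∃ U : Set (Fin m → ℂ), IsOpen U ∧ Dense U ∧
    ∀ a ∈ U, orthF A (Tspace A a a) = {0}

/-- The orthogonal complement `S^{Re F}` of a set `S ⊆ ℂ^m` with respect to
the componentwise real part of `F`. -/
noncomputable def orthReF {m k : ℕ} (A : Fin k → Matrix (Fin m) (Fin m) ℂ)
    (S : Set (Fin m → ℂ)) : Set (Fin m → ℂ) :=
  {x | ∀ y ∈ S, ∀ j, (Fform A x y j).re = 0}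

/-- The `k×k` matrix `B` with entries `B_{lj} = ⟪A_l A⁻¹ A_j a, a⟫`,
where `Amat = ∑ c_j A_j`. -/
noncomputable def Bmatrix {m k : ℕ} (A : Fin k → Matrix (Fin m) (Fin m) ℂ)
    (c : Fin k → ℝ) (a : Fin m → ℂ) : Matrix (Fin k) (Fin k) ℂ :=
  Matrix.of fun l j => hermInner ((A l * (∑ i, (c i : ℂ) • A i)⁻¹ * A j).mulVec a) a

/-- `Re B = (B + conj B)/2` (entrywise conjugate). -/
noncomputable def ReB {m k : ℕ} (A : Fin k → Matrix (Fin m) (Fin m) ℂ)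
    (c : Fin k → ℝ) (a : Fin m → ℂ) : Matrix (Fin k) (Fin k) ℂ :=
  (2 : ℂ)⁻¹ • (Bmatrix A c a + (Bmatrix A c a).map (starRingEnd ℂ))

lemma hermInner_add_left {m : ℕ} (u v b : Fin m → ℂ) :
    hermInner (u + v) b = hermInner u b + hermInner v b := by
  simp [hermInner, add_mul, Finset.sum_add_distrib]

lemma hermInner_smul_left {m : ℕ} (r : ℂ) (u b : Fin m → ℂ) :
    hermInner (r • u) b = r * hermInner u b := by
  simp [hermInner, Finset.mul_sum, mul_assoc]

lemma hermInner_sum_left {m n : ℕ} (f : Fin n → (Fin m → ℂ)) (b : Fin m → ℂ) :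
    hermInner (∑ i, f i) b = ∑ i, hermInner (f i) b := by
  simp [hermInner, Finset.sum_mul]
  exact Finset.sum_comm

lemma hermInner_conj {m : ℕ} (u v : Fin m → ℂ) :
    (starRingEnd ℂ) (hermInner u v) = hermInner v u := by
  simp [hermInner, mul_comm]

lemma hermInner_sub_right {m : ℕ} (y u v : Fin m → ℂ) :
    hermInner y (u - v) = hermInner y u - hermInner y v := by
  simp [hermInner, mul_sub, Finset.sum_sub_distrib]

lemma hermInner_real_smul_right {m : ℕ} (r : ℝ) (y v : Fin m → ℂ) :
    hermInner y ((r : ℂ) • v) = (r : ℂ) * hermInner y v := by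
  simp [hermInner, Finset.mul_sum]; ring_nf
  simp [mul_comm, mul_assoc, mul_left_comm]

lemma hermInner_sum_right {m n : ℕ} (y : Fin m → ℂ) (f : Fin n → (Fin m → ℂ)) :
    hermInner y (∑ i, f i) = ∑ i, hermInner y (f i) := by
  simp [hermInner, Finset.mul_sum, map_sum]
  exact Finset.sum_comm

lemma hermInner_self_re {m : ℕ} (w : Fin m → ℂ) (h : (hermInner w w).re = 0) : w = 0 := by
  have : ∑ l, Complex.normSq (w l) = 0 := by
    have := h
    simp only [hermInner, Complex.mul_conj] at this
    simpa using this
  funext l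
  have hl := (Finset.sum_eq_zero_iff_of_nonneg (fun i _ => Complex.normSq_nonneg (w i))).1 this l (Finset.mem_univ l)
  simpa using Complex.normSq_eq_zero.1 hl

lemma hermInner_mulVec_herm {m : ℕ} {M : Matrix (Fin m) (Fin m) ℂ} (hM : M.IsHermitian)
    (y a : Fin m → ℂ) : hermInner (M.mulVec y) a = hermInner y (M.mulVec a) := by
  simp only [hermInner, Matrix.mulVec, dotProduct, Finset.sum_mul, map_sum,
    Finset.mul_sum, _root_.map_mul]
  rw [Finset.sum_comm]
  congr 1; funext p; congr 1; funext i
  have hc : (starRingEnd ℂ) (M p i) = M i p := by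
    have := congrFun (congrFun hM.symm i) p
    simpa [Matrix.conjTranspose_apply] using this.symm
  rw [hc]
  ring

lemma sum_mulVec' {m n : ℕ} (M : Fin n → Matrix (Fin m) (Fin m) ℂ) (v : Fin m → ℂ) :
    (∑ i, M i).mulVec v = ∑ i, (M i).mulVec v := by
  funext j
  simp only [Matrix.mulVec, dotProduct, Finset.sum_apply, Matrix.sum_apply,
    Finset.sum_mul]
  exact Finset.sum_comm

lemma mulVec_sum' {m n : ℕ} (M : Matrix (Fin m) (Fin m) ℂ) (v : Fin n → (Fin m → ℂ)) :
    M.mulVec (∑ i, v i) = ∑ i, M.mulVec (v i) := by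
  have h := map_sum M.mulVecLin v Finset.univ
  simpa only [Matrix.mulVecLin_apply] using h

noncomputable def innerL {m : ℕ} (b : Fin m → ℂ) : (Fin m → ℂ) →ₗ[ℂ] ℂ where
  toFun y := hermInner y b
  map_add' u v := hermInner_add_left u v b
  map_smul' r u := hermInner_smul_left r u b

noncomputable def realphi {m : ℕ} (b : Fin m → ℂ) : (Fin m → ℂ) →ₗ[ℝ] ℝ :=
  Complex.reLm.comp ((innerL b).restrictScalars ℝ)

lemma realphi_apply {m : ℕ} (b y : Fin m → ℂ) : realphi b y = (hermInner y b).re := rfl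

theorem stmt12 {m k : ℕ} (hm : 0 < m) (hk : 0 < k)
    (A : Fin k → Matrix (Fin m) (Fin m) ℂ) (hHerm : ∀ j, (A j).IsHermitian)
    (c : Fin k → ℝ) (hA : IsUnit (∑ i, (c i : ℂ) • A i))
    (a : Fin m → ℂ) (hB : (ReB A c a).det ≠ 0) :
    orthReF A (orthReF A {a}) ∩ orthReF A {a} = {0} := by
  classical
  set Amat := ∑ i, (c i : ℂ) • A i with hAmatdef
  have hdet : IsUnit Amat.det := (Matrix.isUnit_iff_isUnit_det _).1 hA
  have hinv : Amat⁻¹ * Amat = 1 := Matrix.nonsing_inv_mul _ hdet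
  ext x
  simp only [Set.mem_inter_iff, Set.mem_singleton_iff]
  constructor
  · rintro ⟨h1, h2⟩
    have ha2 : ∀ l, (Fform A x a l).re = 0 := fun l => h2 a rfl l
    have key : ∀ l, ∃ t : Fin k → ℝ,
        (A l).mulVec x = ∑ j, ((t j : ℂ)) • (A j).mulVec a := by
      intro l
      have hsub : (⨅ j, LinearMap.ker (realphi ((A j).mulVec a))) ≤
          LinearMap.ker (realphi ((A l).mulVec x)) := by
        intro y hy
        rw [Submodule.mem_iInf] at hy
        have hy' : y ∈ orthReF A {a} := by
          intro z hz j
          rcases hz with rfl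
          have hj := hy j
          rw [LinearMap.mem_ker, realphi_apply] at hj
          show (hermInner ((A j).mulVec y) z).re = 0
          rw [hermInner_mulVec_herm (hHerm j)]
          exact hj
        have hxy := h1 y hy' l
        rw [LinearMap.mem_ker, realphi_apply]
        calc (hermInner y ((A l).mulVec x)).re
            = ((starRingEnd ℂ) (hermInner ((A l).mulVec x) y)).re := by
              rw [hermInner_conj]
          _ = (hermInner ((A l).mulVec x) y).re := Complex.conj_re _
          _ = 0 := hxy
      obtain ⟨t, ht⟩ := (Submodule.mem_span_range_iff_exists_fun ℝ).1 (mem_span_of_iInf_ker_le_ker hsub)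
      refine ⟨t, ?_⟩
      have hzero : ∀ y : Fin m → ℂ,
          (hermInner y ((A l).mulVec x - ∑ j, ((t j : ℂ)) • (A j).mulVec a)).re = 0 := by
        intro y
        have hty : ∑ j, t j * (hermInner y ((A j).mulVec a)).re
            = (hermInner y ((A l).mulVec x)).re := by
          have := LinearMap.congr_fun ht y
          simpa [realphi_apply] using this
        rw [hermInner_sub_right, hermInner_sum_right, Complex.sub_re]
        have hre : (∑ j, hermInner y ((t j : ℂ) • (A j).mulVec a)).re
            = ∑ j, t j * (hermInner y ((A j).mulVec a)).re := by
          rw [Complex.re_sum]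
          exact Finset.sum_congr rfl fun j _ => by
            rw [hermInner_real_smul_right, Complex.re_ofReal_mul]
        rw [hre, hty, sub_self]
      have hw := hermInner_self_re _ (hzero _)
      exact sub_eq_zero.1 hw
    choose t ht using key
    set s : Fin k → ℝ := fun j => ∑ i, c i * t i j with hs
    have hAx : Amat.mulVec x = ∑ j, ((s j : ℂ)) • (A j).mulVec a := by
      have h0 : Amat.mulVec x = ∑ i, (c i : ℂ) • (A i).mulVec x := by
        rw [hAmatdef, sum_mulVec']
        exact Finset.sum_congr rfl fun i _ => Matrix.smul_mulVec _ _ _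
      rw [h0]
      calc ∑ i, (c i : ℂ) • (A i).mulVec x
          = ∑ i, ∑ j, ((c i : ℂ) * (t i j : ℂ)) • (A j).mulVec a := by
            refine Finset.sum_congr rfl fun i _ => ?_
            rw [ht i, Finset.smul_sum]
            exact Finset.sum_congr rfl fun j _ => smul_smul _ _ _
        _ = ∑ j, ∑ i, ((c i : ℂ) * (t i j : ℂ)) • (A j).mulVec a := Finset.sum_comm
        _ = ∑ j, ((s j : ℂ)) • (A j).mulVec a := by
            refine Finset.sum_congr rfl fun j _ => ?_
            rw [← Finset.sum_smul]
            congr 1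
            rw [hs]
            push_cast
            rfl
    have hx_eq : x = Amat⁻¹.mulVec (Amat.mulVec x) := by
      rw [Matrix.mulVec_mulVec, hinv, Matrix.one_mulVec]
    have hF : ∀ l, Fform A x a l = ∑ j, (s j : ℂ) * Bmatrix A c a l j := by
      intro l
      have hB' : ∀ j, Bmatrix A c a l j = hermInner ((A l * Amat⁻¹ * A j).mulVec a) a := by
        intro j; rw [hAmatdef]; rfl
      have hxv : (A l).mulVec x = ∑ j, (s j : ℂ) • ((A l * Amat⁻¹ * A j).mulVec a) := by
        conv_lhs => rw [hx_eq, hAx]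
        rw [mulVec_sum']
        have : ∀ j, Amat⁻¹.mulVec ((s j : ℂ) • (A j).mulVec a)
            = (s j : ℂ) • (Amat⁻¹ * A j).mulVec a := by
          intro j
          rw [Matrix.mulVec_smul, Matrix.mulVec_mulVec]
        simp only [this]
        rw [mulVec_sum']
        refine Finset.sum_congr rfl fun j _ => ?_
        rw [Matrix.mulVec_smul, Matrix.mulVec_mulVec, Matrix.mul_assoc]
      show hermInner ((A l).mulVec x) a = _
      rw [hxv, hermInner_sum_left]
      exact Finset.sum_congr rfl fun j _ => by
        rw [hermInner_smul_left, hB' j]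
    have hRs : ∀ l, ∑ j, ReB A c a l j * (s j : ℂ) = 0 := by
      intro l
      have hz := ha2 l
      rw [hF l] at hz
      have hthis : ∑ j, ReB A c a l j * (s j : ℂ)
          = (2 : ℂ)⁻¹ * ((∑ j, (s j : ℂ) * Bmatrix A c a l j)
            + (starRingEnd ℂ) (∑ j, (s j : ℂ) * Bmatrix A c a l j)) := by
        rw [map_sum, ← Finset.sum_add_distrib, Finset.mul_sum]
        refine Finset.sum_congr rfl fun j _ => ?_
        simp only [ReB, Matrix.smul_apply, Matrix.add_apply, Matrix.map_apply,
          smul_eq_mul, _root_.map_mul, Complex.conj_ofReal]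
        ring
      rw [hthis, Complex.add_conj, hz]
      simp
    have hRdet : IsUnit ((ReB A c a).det) := isUnit_iff_ne_zero.2 hB
    have hRinv : (ReB A c a)⁻¹ * ReB A c a = 1 := Matrix.nonsing_inv_mul _ hRdet
    have hmv : (ReB A c a).mulVec (fun j => (s j : ℂ)) = 0 := funext fun l => hRs l
    have hsz : (fun j => (s j : ℂ)) = (0 : Fin k → ℂ) := by
      have hcg := congrArg (fun v => (ReB A c a)⁻¹.mulVec v) hmv
      simpa [Matrix.mulVec_mulVec, hRinv, Matrix.one_mulVec, Matrix.mulVec_zero] using hcg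
    have hs0 : ∀ j, s j = 0 := fun j => by
      have h0 : (s j : ℂ) = 0 := by simpa using congrFun hsz j
      exact_mod_cast h0
    have hAx0 : Amat.mulVec x = 0 := by
      rw [hAx]
      simp [hs0]
    have hcg := congrArg (fun v => Amat⁻¹.mulVec v) hAx0
    simpa [Matrix.mulVec_mulVec, hinv, Matrix.one_mulVec, Matrix.mulVec_zero] using hcg
  · rintro rfl
    constructor <;> intro y hy j <;>
      simp [Fform, hermInner, Matrix.mulVec_zero]
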